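/- Under the quasi-neutrality hypothesis ρₑⱼⁿ = ρᵢⱼⁿ ≠ 0 for all j, the double limit (ε,λ²) → (0,0) of the discretized Poisson Laplacian [∂ₓₓφ]^{n+1/2}ⱼ equals the centered second difference of ln ρₑⁿ: (ln ρₑ,ⱼ₊₁ⁿ + ln ρₑ,ⱼ₋₁ⁿ − 2 ln ρₑ,ⱼⁿ)/Δx². -/

import Mathlib

open Filter Topology

/-- Under quasi-neutrality ρₑⱼⁿ = ρᵢⱼⁿ ≠ 0, the double limit (ε,λ²) → (0⁺,0⁺) of the
discretized Poisson Laplacian equals the centered second difference of ln ρₑⁿ. -/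
theorem stmt_2 (ρe ρi : ℤ → ℝ) (j : ℤ) (Δt Δx K1 Kh : ℝ)
    (hΔt : 0 < Δt) (hΔx : 0 < Δx)
    (hqn : ∀ i : ℤ, ρe i = ρi i) (hne : ∀ i : ℤ, ρe i ≠ 0) :
    Tendsto (fun p : ℝ × ℝ =>
        (p.1 * ρe j -
            ρi j * (p.1 * K1 - Real.sqrt p.1 * Kh -
              Δt ^ 2 / Δx ^ 2 *
                (Real.log (ρe (j + 1)) + Real.log (ρe (j - 1)) - 2 * Real.log (ρe j)))) /
          (p.2 * (p.1 * K1 - Real.sqrt p.1 * Kh -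
              Δt ^ 2 / Δx ^ 2 *
                (Real.log (ρe (j + 1)) + Real.log (ρe (j - 1)) - 2 * Real.log (ρe j)))
            + Δt ^ 2 * ρe j))
      ((𝓝[>] (0 : ℝ)) ×ˢ (𝓝[>] (0 : ℝ)))
      (𝓝 ((Real.log (ρe (j + 1)) + Real.log (ρe (j - 1)) - 2 * Real.log (ρe j)) / Δx ^ 2)) := by
  set L : ℝ := Real.log (ρe (j + 1)) + Real.log (ρe (j - 1)) - 2 * Real.log (ρe j) with hL
  have hle : ((𝓝[>] (0 : ℝ)) ×ˢ (𝓝[>] (0 : ℝ))) ≤ 𝓝 ((0 : ℝ), (0 : ℝ)) := by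
    rw [nhds_prod_eq]
    exact Filter.prod_mono nhdsWithin_le_nhds nhdsWithin_le_nhds
  have hC : ContinuousAt (fun p : ℝ × ℝ =>
      (p.1 * ρe j - ρi j * (p.1 * K1 - Real.sqrt p.1 * Kh - Δt ^ 2 / Δx ^ 2 * L)) /
        (p.2 * (p.1 * K1 - Real.sqrt p.1 * Kh - Δt ^ 2 / Δx ^ 2 * L) + Δt ^ 2 * ρe j))
      ((0 : ℝ), (0 : ℝ)) := by
    apply ContinuousAt.div
    · fun_prop
    · fun_prop
    · simp only [zero_mul, zero_add]
      exact mul_ne_zero (pow_ne_zero 2 hΔt.ne') (hne j)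
  have h := hC.tendsto.mono_left hle
  convert h using 2
  simp only [Real.sqrt_zero, zero_mul, mul_zero, zero_sub, zero_add, sub_zero, neg_sub,
    sub_neg_eq_add]
  rw [← hqn j]
  field_simp [hne j, hΔt.ne', hΔx.ne']
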